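/- Let ℂ[X,Y,Z] be a polynomial ring and I the ideal (Y², XY, X² + YZ). Then (Y + XZ)² ∉ I. Consequently, for the triangular derivation δ = y² ∂_z − (x + 2yz) ∂_u of B = ℂ[x,y][z,u] with kernel A = ℂ[x,y][v], v = xz + y(yu + z²), the square of the Vénéreau polynomial f = y + xv does not lie in the plinth ideal pl(δ) = y²A + xyA + (x² + yv)A. -/

import Mathlib

open MvPolynomial

set_option synthInstance.maxHeartbeats 1000000
set_option maxHeartbeats 1000000

noncomputable def ψv : MvPolynomial (Fin 3) ℂ →ₐ[ℂ] Polynomial ℂ :=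
  aeval ![Polynomial.C Complex.I * Polynomial.X ^ 4, Polynomial.X ^ 7, Polynomial.X]

lemma venereau_part1 : ((X 1 + X 0 * X 2 : MvPolynomial (Fin 3) ℂ) ^ 2 ∉
      Ideal.span ({(X 1) ^ 2, X 0 * X 1, (X 0) ^ 2 + X 1 * X 2} :
        Set (MvPolynomial (Fin 3) ℂ))) := by
  intro h
  have hle : Ideal.span ({(X 1) ^ 2, X 0 * X 1, (X 0) ^ 2 + X 1 * X 2} :
      Set (MvPolynomial (Fin 3) ℂ)) ≤
      Ideal.comap ψv (Ideal.span {(Polynomial.X : Polynomial ℂ) ^ 11}) := by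
    rw [Ideal.span_le]
    rintro p hp
    simp only [Set.mem_insert_iff, Set.mem_singleton_iff] at hp
    rcases hp with rfl | rfl | rfl <;>
      simp only [SetLike.mem_coe, Ideal.mem_comap, map_add, map_mul, map_pow, ψv, aeval_X,
        Matrix.cons_val_zero, Matrix.cons_val_one, Matrix.head_cons, Matrix.cons_val_two,
        Matrix.tail_cons, Ideal.mem_span_singleton]
    · exact ⟨Polynomial.X ^ 3, by ring⟩
    · exact ⟨Polynomial.C Complex.I, by ring⟩
    · refine ⟨0, ?_⟩
      have h2 : (Polynomial.C Complex.I : Polynomial ℂ)^2 = -1 := by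
        rw [← Polynomial.C_pow, Complex.I_sq]; simp
      linear_combination (Polynomial.X : Polynomial ℂ)^8 * h2
  have hmem := hle h
  rw [Ideal.mem_comap, Ideal.mem_span_singleton] at hmem
  obtain ⟨q, hq⟩ := hmem
  have hψ : ψv ((X 1 + X 0 * X 2 : MvPolynomial (Fin 3) ℂ) ^ 2)
      = Polynomial.X ^ 14 + 2 * Polynomial.C Complex.I * Polynomial.X ^ 12
        - Polynomial.X ^ 10 := by
    simp only [map_add, map_mul, map_pow, ψv, aeval_X, Matrix.cons_val_zero,
      Matrix.cons_val_one, Matrix.head_cons, Matrix.cons_val_two, Matrix.tail_cons]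
    have h2 : (Polynomial.C Complex.I : Polynomial ℂ)^2 = -1 := by
      rw [← Polynomial.C_pow, Complex.I_sq]; simp
    linear_combination (Polynomial.X : Polynomial ℂ)^10 * h2
  rw [hψ] at hq
  have := congrArg (fun p => Polynomial.coeff p 10) hq
  simp only [Polynomial.coeff_add, Polynomial.coeff_sub, Polynomial.coeff_X_pow,
    Polynomial.coeff_C_mul] at this
  rw [mul_comm ((Polynomial.X : Polynomial ℂ) ^ 11) q] at this
  simp [Polynomial.coeff_mul_X_pow'] at this

noncomputable def Vp : MvPolynomial (Fin 4) ℂ :=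
  X 0 * X 2 + X 1 * (X 1 * X 3 + (X 2) ^ 2)

noncomputable def θv : MvPolynomial (Fin 3) ℂ →ₐ[ℂ] MvPolynomial (Fin 4) ℂ :=
  aeval ![X 0, X 1, Vp]

abbrev Kf := FractionRing (MvPolynomial (Fin 3) ℂ)

noncomputable def σv : MvPolynomial (Fin 4) ℂ →ₐ[ℂ] Kf :=
  aeval ![algebraMap _ Kf (X 0 : MvPolynomial (Fin 3) ℂ),
    algebraMap _ Kf (X 1 : MvPolynomial (Fin 3) ℂ), 0,
    algebraMap _ Kf (X 2 : MvPolynomial (Fin 3) ℂ) *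
      (algebraMap _ Kf (X 1 : MvPolynomial (Fin 3) ℂ))⁻¹ ^ 2]

lemma sigma_theta (p : MvPolynomial (Fin 3) ℂ) : σv (θv p) = algebraMap _ Kf p := by
  have h1 : (algebraMap (MvPolynomial (Fin 3) ℂ) Kf (X 1)) ≠ 0 := by
    intro h
    exact (X_ne_zero 1) (IsFractionRing.injective (MvPolynomial (Fin 3) ℂ) Kf (by simpa using h))
  have : σv.comp θv = IsScalarTower.toAlgHom ℂ (MvPolynomial (Fin 3) ℂ) Kf := by
    apply MvPolynomial.algHom_ext
    intro i
    fin_cases i <;>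
      simp only [AlgHom.comp_apply, θv, aeval_X, Matrix.cons_val_zero, Matrix.cons_val_one,
        Matrix.head_cons, Matrix.cons_val_two, Matrix.tail_cons, Vp, IsScalarTower.toAlgHom_apply,
        map_add, map_mul, map_pow, σv, Matrix.cons_val_three, Fin.isValue]
    · simp
    · simp
    · have : (X (⟨2, by norm_num⟩ : Fin 3) : MvPolynomial (Fin 3) ℂ) = X 2 := rfl
      rw [this]
      rw [show (⟨2, by norm_num⟩ : Fin 3) = 2 from rfl]
      simp only [Matrix.cons_val_two, Matrix.tail_cons, Matrix.head_cons, map_add, map_mul,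
        map_pow, aeval_X, Matrix.cons_val_zero, Matrix.cons_val_one, Matrix.cons_val_three]
      field_simp
      ring
  calc σv (θv p) = (σv.comp θv) p := rfl
    _ = _ := by rw [this]; rfl

lemma theta_inj : Function.Injective θv := by
  intro a b hab
  have := congrArg σv hab
  rw [sigma_theta, sigma_theta] at this
  exact IsFractionRing.injective (MvPolynomial (Fin 3) ℂ) Kf this

lemma range_cons3 (a b c : MvPolynomial (Fin 4) ℂ) :
    ({a, b, c} : Set (MvPolynomial (Fin 4) ℂ)) = Set.range ![a, b, c] := by
  ext w
  constructor
  · rintro (rfl | rfl | rfl)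
    exacts [⟨0, rfl⟩, ⟨1, rfl⟩, ⟨2, rfl⟩]
  · rintro ⟨i, rfl⟩
    fin_cases i <;> simp

/-- In `ℂ[X,Y,Z]`, `(Y + XZ)² ∉ (Y², XY, X² + YZ)`. Consequently, for the triangular
derivation `δ = y² ∂_z − (x + 2yz) ∂_u` of `B = ℂ[x,y][z,u]` with kernel
`A = ℂ[x,y][v]`, `v = xz + y(yu + z²)`, the square of the Vénéreau polynomial
`f = y + xv` does not lie in the plinth ideal `pl(δ) = y²A + xyA + (x² + yv)A`. -/
theorem venereau_square_not_in_plinth :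
    ((X 1 + X 0 * X 2 : MvPolynomial (Fin 3) ℂ) ^ 2 ∉
      Ideal.span ({(X 1) ^ 2, X 0 * X 1, (X 0) ^ 2 + X 1 * X 2} :
        Set (MvPolynomial (Fin 3) ℂ))) ∧
    (∀ x y z u v f : MvPolynomial (Fin 4) ℂ,
      x = X 0 → y = X 1 → z = X 2 → u = X 3 →
      v = x * z + y * (y * u + z ^ 2) → f = y + x * v →
      f ^ 2 ∉ {w : MvPolynomial (Fin 4) ℂ |
        ∃ a1 ∈ Algebra.adjoin ℂ ({x, y, v} : Set (MvPolynomial (Fin 4) ℂ)),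
        ∃ a2 ∈ Algebra.adjoin ℂ ({x, y, v} : Set (MvPolynomial (Fin 4) ℂ)),
        ∃ a3 ∈ Algebra.adjoin ℂ ({x, y, v} : Set (MvPolynomial (Fin 4) ℂ)),
          w = y ^ 2 * a1 + x * y * a2 + (x ^ 2 + y * v) * a3}) := by
  refine ⟨venereau_part1, ?_⟩
  intro x y z u v f hx hy hz hu hv hf
  subst hx hy hz hu hv hf
  rintro ⟨a1, ha1, a2, ha2, a3, ha3, heq⟩
  have hVp : (X 0 * X 2 + X 1 * (X 1 * X 3 + (X 2 : MvPolynomial (Fin 4) ℂ) ^ 2)) = Vp := rfl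
  rw [hVp] at ha1 ha2 ha3 heq
  have hadj : Algebra.adjoin ℂ ({X 0, X 1, Vp} : Set (MvPolynomial (Fin 4) ℂ)) = θv.range := by
    rw [range_cons3, Algebra.adjoin_range_eq_range_aeval]
    rfl
  rw [hadj] at ha1 ha2 ha3
  obtain ⟨p1, rfl⟩ := ha1
  obtain ⟨p2, rfl⟩ := ha2
  obtain ⟨p3, rfl⟩ := ha3
  have key : θv ((X 1 + X 0 * X 2 : MvPolynomial (Fin 3) ℂ) ^ 2)
      = θv ((X 1) ^ 2 * p1 + X 0 * X 1 * p2 + ((X 0) ^ 2 + X 1 * X 2) * p3) := by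
    simp only [map_add, map_mul, map_pow, θv, aeval_X, Matrix.cons_val_zero,
      Matrix.cons_val_one, Matrix.head_cons, Matrix.cons_val_two, Matrix.tail_cons]
    exact heq
  have hkey := theta_inj key
  apply venereau_part1
  rw [hkey]
  have m1 : ((X 1 : MvPolynomial (Fin 3) ℂ)) ^ 2 ∈
      Ideal.span ({(X 1) ^ 2, X 0 * X 1, (X 0) ^ 2 + X 1 * X 2} :
        Set (MvPolynomial (Fin 3) ℂ)) := Ideal.subset_span (by left; rfl)
  have m2 : ((X 0 : MvPolynomial (Fin 3) ℂ)) * X 1 ∈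
      Ideal.span ({(X 1) ^ 2, X 0 * X 1, (X 0) ^ 2 + X 1 * X 2} :
        Set (MvPolynomial (Fin 3) ℂ)) := Ideal.subset_span (by right; left; rfl)
  have m3 : ((X 0 : MvPolynomial (Fin 3) ℂ)) ^ 2 + X 1 * X 2 ∈
      Ideal.span ({(X 1) ^ 2, X 0 * X 1, (X 0) ^ 2 + X 1 * X 2} :
        Set (MvPolynomial (Fin 3) ℂ)) := Ideal.subset_span (by right; right; rfl)
  exact Ideal.add_mem _ (Ideal.add_mem _ (Ideal.mul_mem_right _ _ m1)
    (Ideal.mul_mem_right _ _ m2)) (Ideal.mul_mem_right _ _ m3)
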